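/- Let r ∈ ℝ, μ > r, σ > 0, α > 0, T > 0, θ := (μ − r)/σ, and V(t,x) = −exp(−α x e^{r(T−t)} − (θ²/2)(T−t)). Fix t ∈ [0,T] and x > 0. Then the quadratic function f(π) := (r x + (μ − r) π x)·∂V/∂x(t,x) + (1/2) σ² π² x² · ∂²V/∂x²(t,x) attains its maximum over π ∈ ℝ at the unique point π̂ = (θ/(x α σ)) e^{−r(T−t)}, and ∂V/∂t(t,x) + f(π̂) = 0. -/

import Mathlib

open Real

/-- The quadratic expression inside the supremum of the HJB equation, evaluated at the candidate
value function `V(t,x) = -exp(-α x e^{r(T-t)} - (θ²/2)(T-t))`, attains its maximum over `p ∈ ℝ`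
at the unique point `phat = (θ/(xασ)) e^{-r(T-t)}`, and `∂V/∂t(t,x) + f(phat) = 0`. -/
theorem stmt_1 (r μ σ α T : ℝ) (hμ : r < μ) (hσ : 0 < σ) (hα : 0 < α) (hT : 0 < T)
    (θ : ℝ) (hθ : θ = (μ - r) / σ)
    (V : ℝ → ℝ → ℝ)
    (hV : ∀ t x, V t x = -Real.exp (-(α * x * Real.exp (r * (T - t))) - θ ^ 2 / 2 * (T - t)))
    (t : ℝ) (ht : t ∈ Set.Icc (0 : ℝ) T) (x : ℝ) (hx : 0 < x)
    (f : ℝ → ℝ)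
    (hf : ∀ p : ℝ, f p = (r * x + (μ - r) * p * x) * deriv (fun x' => V t x') x
        + 1 / 2 * σ ^ 2 * p ^ 2 * x ^ 2 * deriv (deriv (fun x' => V t x')) x)
    (phat : ℝ) (hphat : phat = θ / (x * α * σ) * Real.exp (-(r * (T - t)))) :
    (∀ p : ℝ, p ≠ phat → f p < f phat)
    ∧ deriv (fun t' => V t' x) t + f phat = 0 := by
  have hcpos : (0:ℝ) < Real.exp (r * (T - t)) := Real.exp_pos _
  set c := Real.exp (r * (T - t)) with hc_def
  set B := θ ^ 2 / 2 * (T - t) with hB_def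
  have hgd : deriv (fun x' => V t x')
      = fun x' => (α * c) * Real.exp (-(α * x' * c) - B) := by
    funext x'
    have h1 : (fun x' => V t x') = fun x' => -Real.exp (-(α * x' * c) - B) := by
      funext y; rw [hV]
    rw [h1]
    have hL : HasDerivAt (fun y : ℝ => -(α * y * c) - B) (-(α * c)) x' := by
      simpa using (((hasDerivAt_id x').const_mul α).mul_const c).neg.sub_const B
    have h2 := (hL.exp).neg
    rw [(show HasDerivAt (fun y : ℝ => -Real.exp (-(α * y * c) - B)) _ x' from h2).deriv]; ring
  have hd1 : deriv (fun x' => V t x') x = (α * c) * Real.exp (-(α * x * c) - B) := by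
    rw [hgd]
  have hd2 : deriv (deriv (fun x' => V t x')) x
      = -(α * c) ^ 2 * Real.exp (-(α * x * c) - B) := by
    rw [hgd]
    have hL : HasDerivAt (fun y : ℝ => -(α * y * c) - B) (-(α * c)) x := by
      simpa using (((hasDerivAt_id x).const_mul α).mul_const c).neg.sub_const B
    have h2 := (hL.exp).const_mul (α * c)
    rw [h2.deriv]; ring
  have hdt : deriv (fun t' => V t' x) t
      = -(Real.exp (-(α * x * c) - B)) * (α * x * r * c + θ ^ 2 / 2) := by
    have h1 : (fun t' => V t' x)
        = fun t' => -Real.exp (-(α * x * Real.exp (r * (T - t'))) - θ ^ 2 / 2 * (T - t')) := by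
      funext y; rw [hV]
    rw [h1]
    have h2 : HasDerivAt (fun t' : ℝ => r * (T - t')) (-r) t := by
      simpa using ((hasDerivAt_id t).const_sub T).const_mul r
    have h3 := (h2.exp).const_mul (α * x)
    have h4 : HasDerivAt (fun t' : ℝ => θ ^ 2 / 2 * (T - t')) (-(θ ^ 2 / 2)) t := by
      simpa using ((hasDerivAt_id t).const_sub T).const_mul (θ ^ 2 / 2)
    have h5 : HasDerivAt
        (fun t' : ℝ => -(α * x * Real.exp (r * (T - t'))) - θ ^ 2 / 2 * (T - t'))
        (α * x * r * c + θ ^ 2 / 2) t := by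
      have := (h3.neg).sub h4
      exact (show HasDerivAt (fun t' : ℝ => -(α * x * Real.exp (r * (T - t'))) - θ ^ 2 / 2 * (T - t')) _ t from this).congr_deriv (by rw [hc_def]; ring)
    rw [(show HasDerivAt (fun t' : ℝ => -Real.exp (-(α * x * Real.exp (r * (T - t'))) - θ ^ 2 / 2 * (T - t'))) _ t from h5.exp.neg).deriv]; ring
  have hEpos : (0:ℝ) < Real.exp (-(α * x * c) - B) := Real.exp_pos _
  set E := Real.exp (-(α * x * c) - B) with hE_def
  have hcon : Real.exp (-(r * (T - t))) = c⁻¹ := by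
    rw [Real.exp_neg]
  have hx' := hx.ne'
  have hσ' := hσ.ne'
  have hα' := hα.ne'
  have hc' := hcpos.ne'
  constructor
  · intro p hp
    have key : f phat - f p = 1 / 2 * σ ^ 2 * x ^ 2 * (α * c) ^ 2 * E * (p - phat) ^ 2 := by
      rw [hf, hf, hd1, hd2, hphat, hθ, hcon]
      field_simp
      ring
    have hsq : (0:ℝ) < (p - phat) ^ 2 := by
      have : p - phat ≠ 0 := sub_ne_zero.mpr hp
      positivity
    nlinarith [sq_nonneg (α * c), mul_pos (mul_pos (mul_pos (mul_pos (by positivity : (0:ℝ) < 1/2 * σ ^ 2) (by positivity : (0:ℝ) < x ^ 2)) (by positivity : (0:ℝ) < (α*c)^2)) hEpos) hsq]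
  · rw [hdt, hf, hd1, hd2, hphat, hθ, hcon]
    field_simp
    ring
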